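/- In coordinates ξ = tα²/x, η = (ξ + tα²)/z, the genus one curve α²z(x+zt) = x(x+1)(z+1) transforms into the Weierstrass-type equation η² + (1-α²)ξη + tα²η = ξ³ + tα²ξ², i.e., if α²z(x+zt)=x(x+1)(z+1) with x,z ≠ 0, then setting ξ = tα²/x and η = (ξ+tα²)/z one has η² + (1-α²)ξη + tα²η = ξ³ + tα²ξ². -/

import Mathlib

/-- The fibre D_α transforms into a Weierstrass-type equation. -/
theorem stmt_4 {K : Type*} [Field K] (h2 : (2 : K) ≠ 0) (t α x z : K)
    (ht : t ≠ 0) (hx : x ≠ 0) (hz : z ≠ 0)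
    (h : α ^ 2 * z * (x + z * t) = x * (x + 1) * (z + 1)) :
    (((t * α ^ 2 / x) + t * α ^ 2) / z) ^ 2
      + (1 - α ^ 2) * (t * α ^ 2 / x) * (((t * α ^ 2 / x) + t * α ^ 2) / z)
      + t * α ^ 2 * (((t * α ^ 2 / x) + t * α ^ 2) / z)
    = (t * α ^ 2 / x) ^ 3 + t * α ^ 2 * (t * α ^ 2 / x) ^ 2 := by
  field_simp
  linear_combination (-(α ^ 4) * (1 + x)) * h
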